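/- Let n ≥ 1 and let T be an (n+1)×(n+1) real positive definite matrix with corner entry m = T₀₀ and lower-right n×n block T₀. Then (det(T)/m)^{1/n} ≤ trace(T₀), where the left-hand side uses the real power with exponent 1/n. -/

import Mathlib

open Matrix Finset

lemma trace_eq_sum_eigenvalues {m : Type*} [Fintype m] [DecidableEq m]
    {A : Matrix m m ℝ} (hA : A.IsHermitian) :
    A.trace = ∑ i, hA.eigenvalues i := by
  simpa using hA.trace_eq_sum_eigenvalues

lemma psd_trace_nonneg {m : Type*} [Fintype m] [DecidableEq m] {A : Matrix m m ℝ}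
    (hA : A.PosSemidef) : 0 ≤ A.trace := by
  rw [Matrix.trace]
  refine Finset.sum_nonneg fun i _ => ?_
  exact hA.diag_nonneg

/-- Let `n ≥ 1` and let `T` be an `(n+1)×(n+1)` real positive definite matrix with corner
entry `m = T₀₀` and lower-right `n×n` block `T₀`. Then `(det(T)/m)^{1/n} ≤ trace(T₀)`,
where the left-hand side uses the real power with exponent `1/n`. -/
theorem stmt_12 (n : ℕ) (hn : 1 ≤ n) (T : Matrix (Fin (n + 1)) (Fin (n + 1)) ℝ)
    (hT : T.PosDef) :
    (T.det / T 0 0) ^ ((1 : ℝ) / n) ≤ (T.submatrix Fin.succ Fin.succ).trace := by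
  -- the reindexing equivalence
  let e : Unit ⊕ Fin n ≃ Fin (n + 1) :=
    { toFun := Sum.elim (fun _ => 0) Fin.succ
      invFun := fun i => Fin.cases (Sum.inl ()) Sum.inr i
      left_inv := by rintro (⟨⟩ | i) <;> rfl
      right_inv := fun i => Fin.cases rfl (fun i => rfl) i }
  set B : Matrix Unit (Fin n) ℝ := Matrix.of fun _ j => T 0 j.succ with hB
  set D : Matrix (Fin n) (Fin n) ℝ := T.submatrix Fin.succ Fin.succ with hD
  set A : Matrix Unit Unit ℝ := Matrix.diagonal (fun _ => T 0 0) with hA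
  have hm : 0 < T 0 0 := by
    exact hT.diag_pos
  have hApd : A.PosDef := by
    rw [hA, Matrix.posDef_diagonal_iff]
    exact fun _ => hm
  have hAinv : Invertible A := by
    apply A.invertibleOfIsUnitDet
    simp [hA, Matrix.det_diagonal, hm.ne']
  have hM : T.submatrix e e = Matrix.fromBlocks A B Bᴴ D := by
    ext i j
    cases i with
    | inl u =>
      cases j with
      | inl v => simp [e, hA, Matrix.fromBlocks, Matrix.submatrix, Matrix.diagonal]
      | inr j => simp [e, hB, Matrix.fromBlocks, Matrix.submatrix]
    | inr i =>
      cases j with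
      | inl v =>
        have := hT.1.apply i.succ 0
        simp only [star_trivial] at this
        simp [e, hB, Matrix.fromBlocks, Matrix.submatrix, Matrix.conjTranspose_apply, ← this]
      | inr j => simp [e, hD, Matrix.fromBlocks, Matrix.submatrix]
  set S : Matrix (Fin n) (Fin n) ℝ := D - Bᴴ * A⁻¹ * B with hSdef
  have hSpsd : S.PosSemidef := by
    rw [hSdef]
    rw [← Matrix.PosDef.fromBlocks₁₁ B D hApd, ← hM]
    exact hT.posSemidef.submatrix e
  have hdet : T.det = T 0 0 * S.det := by
    have h1 : (T.submatrix e e).det = T.det := Matrix.det_submatrix_equiv_self e T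
    rw [← h1, hM, Matrix.det_fromBlocks₁₁, Matrix.invOf_eq_nonsing_inv]
    congr 1
    simp [hA, Matrix.det_diagonal]
  -- the correction term is PSD
  have hXpsd : (Bᴴ * A⁻¹ * B).PosSemidef := by
    have hAi : A⁻¹ = Matrix.diagonal (fun _ : Unit => (T 0 0)⁻¹) := by
      refine Matrix.inv_eq_right_inv ?_
      rw [hA, Matrix.diagonal_mul_diagonal]
      convert Matrix.diagonal_one
      simp [hm.ne']
    have : (A⁻¹).PosSemidef := by
      rw [hAi]
      refine Matrix.PosSemidef.diagonal ?_
      intro i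
      simpa using inv_nonneg.mpr hm.le
    exact this.conjTranspose_mul_mul_same B
  have htrS : S.trace ≤ D.trace := by
    have h1 : D.trace = S.trace + (Bᴴ * A⁻¹ * B).trace := by
      rw [hSdef, Matrix.trace_sub]; ring
    rw [h1]
    linarith [psd_trace_nonneg hXpsd]
  have htrS0 : 0 ≤ S.trace := psd_trace_nonneg hSpsd
  -- AM-GM on eigenvalues of S
  have hherm := hSpsd.1
  have hz : ∀ i ∈ Finset.univ, (0:ℝ) ≤ hherm.eigenvalues i :=
    fun i _ => hSpsd.eigenvalues_nonneg i
  have hw : ∀ i ∈ (Finset.univ : Finset (Fin n)), (0:ℝ) ≤ (1:ℝ)/n :=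
    fun i _ => by positivity
  have hw' : ∑ _i : Fin n, (1:ℝ)/n = 1 := by
    rw [Finset.sum_const]
    simp only [Finset.card_univ, Fintype.card_fin, nsmul_eq_mul]
    field_simp
  have hamgm := Real.geom_mean_le_arith_mean_weighted Finset.univ _ _ hw hw' hz
  have hprod : ∏ i, hherm.eigenvalues i ^ ((1:ℝ)/n) = S.det ^ ((1:ℝ)/n) := by
    rw [Real.finset_prod_rpow _ _ hz]
    congr 1
    rw [hherm.det_eq_prod_eigenvalues]
    norm_num
  have hsum : ∑ i, (1:ℝ)/n * hherm.eigenvalues i = (1/n) * S.trace := by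
    rw [trace_eq_sum_eigenvalues hherm, Finset.mul_sum]
  have key : S.det ^ ((1:ℝ)/n) ≤ S.trace := by
    rw [← hprod]
    refine hamgm.trans ?_
    rw [hsum]
    have hn1 : (1:ℝ)/n ≤ 1 := by
      rw [div_le_one (by exact_mod_cast hn)]
      exact_mod_cast hn
    nlinarith
  have hdiv : T.det / T 0 0 = S.det := by
    rw [hdet]; field_simp
  rw [hdiv]
  exact key.trans (htrS.trans (le_of_eq rfl))
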